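/- If a closed walk from the origin uses subaisles in block 1 with westmost aisle a₁ and, among blocks b ≥ 2, uses a subaisle in some aisle a₂ with a₂ < a₁, then the total horizontal (cross-aisle) distance travelled by the walk is at least d(1,a_max¹) − d(1,a₁) + 2(d(1,a₁) − d(1,a₂)), where a_max¹ is the eastmost aisle used in block 1. -/

import Mathlib

/-- Grid vertices: `none` is the origin, `some (r, a)` is the vertex on
cross-aisle `r` at aisle `a`. -/
abbrev WVertex : Type := Option (ℕ × ℕ)

/-- Horizontal coordinate of a vertex: the origin (at the northwest corner, on
the first cross-aisle) has abscissa `ox`, and a grid vertex in aisle `a` has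
abscissa `hx a`; `hx a - hx 0` is the horizontal distance `d(1,a)` from aisle 1
to aisle `a`, identical across cross-aisles. -/
def xcoord (hx : ℕ → ℝ) (ox : ℝ) : WVertex → ℝ
  | none => ox
  | some (_, a) => hx a

/-- One step in a warehouse with `WA` aisles and `WB` blocks: an aisle edge, a
cross-aisle edge, or an edge joining the origin to the first cross-aisle. -/
def wstep (WA WB : ℕ) (v w : WVertex) : Prop :=
  (∃ r a, r + 1 ≤ WB ∧ a < WA ∧
      ((v = some (r, a) ∧ w = some (r + 1, a)) ∨
        (w = some (r, a) ∧ v = some (r + 1, a)))) ∨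
  (∃ r a, r ≤ WB ∧ a + 1 < WA ∧
      ((v = some (r, a) ∧ w = some (r, a + 1)) ∨
        (w = some (r, a) ∧ v = some (r, a + 1)))) ∨
  (∃ a, a < WA ∧ ((v = none ∧ w = some (0, a)) ∨ (w = none ∧ v = some (0, a))))

/-- Total horizontal travel of a walk: the distance travelled in cross-aisle
edges and origin-connection edges (aisle edges contribute zero since they are
vertical). -/
def whoriz (hx : ℕ → ℝ) (ox : ℝ) (walk : List WVertex) : ℝ :=
  ((walk.zip walk.tail).map
    (fun p => |xcoord hx ox p.1 - xcoord hx ox p.2|)).sum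

/-- The walk traverses (in either direction) the subaisle edge of aisle `a`
in block `r`. -/
def wtraverses (walk : List WVertex) (r a : ℕ) : Prop :=
  (some (r, a), some (r + 1, a)) ∈ walk.zip walk.tail ∨
    (some (r + 1, a), some (r, a)) ∈ walk.zip walk.tail


open Finset in
lemma abs_le_tv (x : ℕ → ℝ) : ∀ {i j : ℕ}, i ≤ j →
    |x j - x i| ≤ ∑ k ∈ Finset.Ico i j, |x (k+1) - x k| := by
  intro i j h
  induction j, h using Nat.le_induction with
  | base => simp
  | succ j hij ih =>
    rw [Finset.sum_Ico_succ_top (by omega)]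
    have := abs_sub_le (x (j+1)) (x j) (x i)
    linarith

open Finset in
lemma tv_chain (x : ℕ → ℝ) {n i1 i2 i3 : ℕ} (h1 : i1 ≤ i2) (h2 : i2 ≤ i3) (h3 : i3 ≤ n) :
    |x i1 - x 0| + |x i2 - x i1| + |x i3 - x i2| + |x n - x i3|
      ≤ ∑ k ∈ Finset.range n, |x (k+1) - x k| := by
  have m1 := Finset.sum_Ico_consecutive (fun k => |x (k+1) - x k|) (Nat.zero_le i1) h1
  have m2 := Finset.sum_Ico_consecutive (fun k => |x (k+1) - x k|) (Nat.zero_le i2) h2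
  have m3 := Finset.sum_Ico_consecutive (fun k => |x (k+1) - x k|) (Nat.zero_le i3) h3
  have a1 := abs_le_tv x (Nat.zero_le i1)
  have a2 := abs_le_tv x h1
  have a3 := abs_le_tv x h2
  have a4 := abs_le_tv x h3
  rw [Finset.range_eq_Ico]
  linarith

lemma mem_zip_tail_iff {L : List WVertex} {p q : WVertex} :
    (p, q) ∈ L.zip L.tail ↔
      ∃ i, i + 1 < L.length ∧ L.getD i none = p ∧ L.getD (i+1) none = q := by
  constructor
  · intro h
    obtain ⟨i, hi, hEq⟩ := List.mem_iff_getElem.1 h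
    have hlen : i + 1 < L.length := by
      simp [List.length_zip, List.length_tail] at hi; omega
    refine ⟨i, hlen, ?_, ?_⟩
    · rw [List.getD_eq_getElem L none (by omega)]
      have := List.getElem_zip (l := L) (l' := L.tail) (i := i) (h := hi)
      rw [this] at hEq
      exact congrArg Prod.fst hEq
    · rw [List.getD_eq_getElem L none (by omega)]
      have := List.getElem_zip (l := L) (l' := L.tail) (i := i) (h := hi)
      rw [this] at hEq
      have := congrArg Prod.snd hEq
      simpa [List.getElem_tail] using this
  · rintro ⟨i, hi, h1, h2⟩
    apply List.mem_iff_getElem.2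
    have hz : i < (L.zip L.tail).length := by
      simp [List.length_zip, List.length_tail]; omega
    refine ⟨i, hz, ?_⟩
    rw [List.getElem_zip]
    rw [List.getD_eq_getElem L none (by omega)] at h1
    rw [List.getD_eq_getElem L none (by omega)] at h2
    simp [List.getElem_tail, h1, h2]

lemma sum_zip_tail (f : WVertex → ℝ) : ∀ (L : List WVertex),
    ((L.zip L.tail).map (fun p => |f p.1 - f p.2|)).sum
      = ∑ k ∈ Finset.range (L.length - 1),
          |f (L.getD (k+1) none) - f (L.getD k none)| := by
  intro L
  induction L with
  | nil => simp
  | cons a L ih =>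
    cases L with
    | nil => simp
    | cons b L =>
      simp only [List.zip_cons_cons, List.tail_cons, List.map_cons, List.sum_cons]
      simp only [List.tail_cons] at ih
      rw [ih]
      have hlen : (a :: b :: L).length - 1 = (L.length + 1) := by simp
      rw [hlen]
      rw [Finset.sum_range_succ']
      simp only [List.getD_cons_succ, List.getD_cons_zero]
      have : (b :: L).length - 1 = L.length := by simp
      rw [this]
      rw [abs_sub_comm]
      ring

lemma chain_step {WA WB : ℕ} {walk : List WVertex} (hchain : walk.Chain' (wstep WA WB))
    {k : ℕ} (hk : k + 1 < walk.length) :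
    wstep WA WB (walk.getD k none) (walk.getD (k+1) none) := by
  have h := List.isChain_iff_getElem.1 hchain k (by omega)
  rw [List.getD_eq_getElem walk none (by omega), List.getD_eq_getElem walk none (by omega)]
  simpa [List.get_eq_getElem] using h

lemma reach_fwd {WA WB : ℕ} {walk : List WVertex} (hchain : walk.Chain' (wstep WA WB))
    (h0 : walk.getD 0 none = none) :
    ∀ k, k < walk.length → ∀ r a, walk.getD k none = some (r, a) → 1 ≤ r →
    ∃ i a', i + 1 ≤ k ∧ walk.getD i none = some (0, a') ∧
      walk.getD (i+1) none = some (1, a') := by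
  intro k
  induction k with
  | zero => intro _ r a h hr; rw [h0] at h; exact absurd h (by simp)
  | succ k ih =>
    intro hk r a hka hr
    have hstep := chain_step hchain hk
    rcases hstep with ⟨r', a', _, _, hc⟩ | ⟨r', a', _, _, hc⟩ | ⟨a', _, hc⟩
    · rcases hc with ⟨h1, h2⟩ | ⟨h2, h1⟩
      · -- walk[k] = (r',a'), walk[k+1] = (r'+1,a')
        rw [hka] at h2
        have h2' : r = r' + 1 ∧ a = a' := by simpa using h2
        rcases Nat.eq_zero_or_pos r' with hz | hp
        · subst hz
          exact ⟨k, a', le_refl _, h1, by rw [hka, h2'.1, h2'.2]⟩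
        · obtain ⟨i, a'', hi, hh1, hh2⟩ := ih (by omega) r' a' h1 hp
          exact ⟨i, a'', by omega, hh1, hh2⟩
      · obtain ⟨i, a'', hi, hh1, hh2⟩ := ih (by omega) (r'+1) a' h1 (by omega)
        exact ⟨i, a'', by omega, hh1, hh2⟩
    · rcases hc with ⟨h1, h2⟩ | ⟨h2, h1⟩
      · rw [hka] at h2
        have h2' : r = r' ∧ a = a' + 1 := by simpa using h2
        obtain ⟨i, a'', hi, hh1, hh2⟩ := ih (by omega) r' a' h1 (by omega)
        exact ⟨i, a'', by omega, hh1, hh2⟩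
      · rw [hka] at h2
        have h2' : r = r' ∧ a = a' := by simpa using h2
        obtain ⟨i, a'', hi, hh1, hh2⟩ := ih (by omega) r' (a'+1) h1 (by omega)
        exact ⟨i, a'', by omega, hh1, hh2⟩
    · rcases hc with ⟨h1, h2⟩ | ⟨h2, h1⟩
      · rw [hka] at h2
        have h2' : r = 0 ∧ a = a' := by simpa using h2
        omega
      · rw [hka] at h2; exact absurd h2 (by simp)

lemma reach_bwd {WA WB : ℕ} {walk : List WVertex} (hchain : walk.Chain' (wstep WA WB))
    (hend : walk.getD (walk.length - 1) none = none) :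
    ∀ fuel k, walk.length - k ≤ fuel → k < walk.length → ∀ r a,
      walk.getD k none = some (r, a) → 1 ≤ r →
    ∃ j a', k ≤ j ∧ j + 1 < walk.length ∧ walk.getD j none = some (1, a') ∧
      walk.getD (j+1) none = some (0, a') := by
  intro fuel
  induction fuel with
  | zero => intro k hf hk; omega
  | succ fuel ih =>
    intro k hf hk r a hka hr
    have hk1 : k + 1 < walk.length := by
      rcases Nat.lt_or_ge (k+1) walk.length with h | h
      · exact h
      · have : k = walk.length - 1 := by omega
        rw [this, hend] at hka; exact absurd hka (by simp)
    have hstep := chain_step hchain hk1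
    rcases hstep with ⟨r', a', _, _, hc⟩ | ⟨r', a', _, _, hc⟩ | ⟨a', _, hc⟩
    · rcases hc with ⟨h1, h2⟩ | ⟨h2, h1⟩
      · -- walk[k] = (r',a'), walk[k+1] = (r'+1,a') : going down (row increases)
        obtain ⟨j, a'', hj, hj1, hh1, hh2⟩ := ih (k+1) (by omega) hk1 (r'+1) a' h2 (by omega)
        exact ⟨j, a'', by omega, hj1, hh1, hh2⟩
      · -- walk[k] = (r'+1,a'), walk[k+1] = (r',a')
        rw [hka] at h1
        have h1' : r = r' + 1 ∧ a = a' := by simpa using h1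
        rcases Nat.eq_zero_or_pos r' with hz | hp
        · exact ⟨k, a', le_refl _, hk1, by rw [hka, h1'.1, h1'.2, hz], by rw [h2, hz]⟩
        · obtain ⟨j, a'', hj, hj1, hh1, hh2⟩ := ih (k+1) (by omega) hk1 r' a' h2 hp
          exact ⟨j, a'', by omega, hj1, hh1, hh2⟩
    · rcases hc with ⟨h1, h2⟩ | ⟨h2, h1⟩
      · rw [hka] at h1
        have h1' : r = r' ∧ a = a' := by simpa using h1
        obtain ⟨j, a'', hj, hj1, hh1, hh2⟩ := ih (k+1) (by omega) hk1 r' (a'+1) h2 (by omega)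
        exact ⟨j, a'', by omega, hj1, hh1, hh2⟩
      · rw [hka] at h1
        have h1' : r = r' ∧ a = a' + 1 := by simpa using h1
        obtain ⟨j, a'', hj, hj1, hh1, hh2⟩ := ih (k+1) (by omega) hk1 r' a' h2 (by omega)
        exact ⟨j, a'', by omega, hj1, hh1, hh2⟩
    · rcases hc with ⟨h1, h2⟩ | ⟨h2, h1⟩
      · rw [hka] at h1; exact absurd h1 (by simp)
      · rw [hka] at h1
        have h1' : r = 0 ∧ a = a' := by simpa using h1
        omega

/-- If a closed walk from the origin uses block-1 subaisles only at aisles in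
`[a₁, aMax1]` (with `a₁` the westmost and `aMax1` the eastmost such aisle) and
also uses a subaisle of some aisle `a₂ < a₁` in a block `b ≥ 2`, then the total
horizontal (cross-aisle) distance travelled is at least
`(d(1,aMax1) − d(1,a₁)) + 2(d(1,a₁) − d(1,a₂))`. -/
theorem stmt_10 (WA WB : ℕ) (hx : ℕ → ℝ) (ox : ℝ)
    (hmono : Monotone hx) (hox : ox ≤ hx 0)
    (walk : List WVertex)
    (hchain : walk.Chain' (wstep WA WB))
    (hhead : walk.head? = some none) (hlast : walk.getLast? = some none)
    (a₁ aMax1 : ℕ)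
    (hF : wtraverses walk 0 a₁) (hL : wtraverses walk 0 aMax1)
    (hext : ∀ a, wtraverses walk 0 a → a₁ ≤ a ∧ a ≤ aMax1)
    (a₂ r₂ : ℕ) (hr₂ : 1 ≤ r₂) (h2 : wtraverses walk r₂ a₂) (ha₂ : a₂ < a₁) :
    (hx aMax1 - hx a₁) + 2 * (hx a₁ - hx a₂) ≤ whoriz hx ox walk := by
  classical
  set x : ℕ → ℝ := fun k => xcoord hx ox (walk.getD k none) with hxdef
  set n : ℕ := walk.length - 1 with hndef
  -- head and last
  have h0 : walk.getD 0 none = none := by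
    cases walk with
    | nil => simp at hhead
    | cons v l => simp at hhead; simp [hhead]
  have hne : walk ≠ [] := by rintro rfl; simp at hhead
  have hendn : walk.getD n none = none := by
    have := List.getLast?_eq_getLast (l := walk) hne
    rw [this] at hlast
    have hl := List.getLast_eq_getElem (l := walk) hne
    rw [List.getD_eq_getElem walk none (by
      have := List.length_pos_iff.2 hne; omega)]
    rw [← hl]
    simpa using hlast
  -- whoriz as TV
  have hwh : whoriz hx ox walk = ∑ k ∈ Finset.range n, |x (k+1) - x k| := by
    unfold whoriz
    rw [sum_zip_tail (xcoord hx ox) walk]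
  -- index where aisle a₂ at row r₂ ≥ 1 is visited
  obtain ⟨m, hm, hmval⟩ :
      ∃ m, m < walk.length ∧ ∃ r, 1 ≤ r ∧ walk.getD m none = some (r, a₂) := by
    rcases h2 with h | h
    · obtain ⟨i, hi, hp, hq⟩ := mem_zip_tail_iff.1 h
      exact ⟨i, by omega, r₂, hr₂, hp⟩
    · obtain ⟨i, hi, hp, hq⟩ := mem_zip_tail_iff.1 h
      exact ⟨i, by omega, r₂ + 1, by omega, hp⟩
  obtain ⟨rm, hrm, hmv⟩ := hmval
  have hxm : x m = hx a₂ := by show xcoord hx ox (walk.getD m none) = hx a₂; rw [hmv]; rfl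
  -- forward traverse before m
  obtain ⟨i, a', hi, hiv1, hiv2⟩ := reach_fwd hchain h0 m hm rm a₂ hmv hrm
  have htravi : wtraverses walk 0 a' := by
    left
    exact mem_zip_tail_iff.2 ⟨i, by omega, hiv1, hiv2⟩
  have ha' : a₁ ≤ a' := (hext a' htravi).1
  have hxi : x i = hx a' := by show xcoord hx ox (walk.getD i none) = hx a'; rw [hiv1]; rfl
  -- backward traverse after m
  obtain ⟨j, a'', hj, hj1, hjv1, hjv2⟩ :=
    reach_bwd hchain hendn walk.length m (by omega) hm rm a₂ hmv hrm
  have htravj : wtraverses walk 0 a'' := by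
    right
    exact mem_zip_tail_iff.2 ⟨j, hj1, hjv1, hjv2⟩
  have ha'' : a₁ ≤ a'' := (hext a'' htravj).1
  have hxj : x j = hx a'' := by show xcoord hx ox (walk.getD j none) = hx a''; rw [hjv1]; rfl
  -- index where aMax1 is visited
  obtain ⟨s, hs, hxs⟩ : ∃ s, s + 1 < walk.length ∧ x s = hx aMax1 := by
    rcases hL with h | h
    · obtain ⟨i', hi', hp, hq⟩ := mem_zip_tail_iff.1 h
      refine ⟨i', hi', ?_⟩
      show xcoord hx ox (walk.getD i' none) = hx aMax1
      rw [hp]; rfl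
    · obtain ⟨i', hi', hp, hq⟩ := mem_zip_tail_iff.1 h
      refine ⟨i', hi', ?_⟩
      show xcoord hx ox (walk.getD i' none) = hx aMax1
      rw [hp]; rfl
  -- endpoint values
  have hx0 : x 0 = ox := by show xcoord hx ox (walk.getD 0 none) = ox; rw [h0]; rfl
  have hxn : x n = ox := by show xcoord hx ox (walk.getD n none) = ox; rw [hendn]; rfl
  -- monotonicity facts
  have hAB : hx a₂ ≤ hx a₁ := hmono ha₂.le
  have hBC : hx a₁ ≤ hx aMax1 := hmono (hext a₁ hF).2
  have h0A : hx 0 ≤ hx a₂ := hmono (Nat.zero_le _)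
  have hB1 : hx a₁ ≤ hx a' := hmono ha'
  have hB2 : hx a₁ ≤ hx a'' := hmono ha''
  rw [hwh]
  rcases le_total s m with hsm | hms
  · -- chain 0 ≤ s ≤ m ≤ j ≤ n
    have hchain4 := tv_chain x (n := n) (i1 := s) (i2 := m) (i3 := j) hsm hj (by omega)
    rw [hx0, hxs, hxm, hxj, hxn] at hchain4
    have b1 := le_abs_self (hx aMax1 - ox)
    have b2 := neg_le_abs (hx a₂ - hx aMax1)
    have b3 := le_abs_self (hx a'' - hx a₂)
    have b4 := neg_le_abs (ox - hx a'')
    linarith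
  · -- chain 0 ≤ i ≤ m ≤ s ≤ n
    have hchain4 := tv_chain x (n := n) (i1 := i) (i2 := m) (i3 := s) (by omega) hms (by omega)
    rw [hx0, hxi, hxm, hxs, hxn] at hchain4
    have b1 := le_abs_self (hx a' - ox)
    have b2 := neg_le_abs (hx a₂ - hx a')
    have b3 := le_abs_self (hx aMax1 - hx a₂)
    have b4 := neg_le_abs (ox - hx aMax1)
    linarith
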